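/- Every shallow pair of a filter f on a Lefschetz complex is a birth-death pair of f; that is, SH(f) ⊆ BD(f). -/

import Mathlib

attribute [local instance] Classical.propDecidable

/-- A Lefschetz complex over an ambient finite type `C` of potential cells:
a finite set `cells` of cells, a dimension function, and a mod-2 incidence
function `bd` supported on `cells`, with `bd x y ≠ 0` only if
`dim y = dim x + 1`, and `∂∘∂ = 0` mod 2. -/
structure LC (C : Type) [Fintype C] [DecidableEq C] : Type where
  cells : Finset C
  dim : C → ℤ
  bd : C → C → ZMod 2
  bd_mem : ∀ x y, bd x y ≠ 0 → x ∈ cells ∧ y ∈ cells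
  bd_dim : ∀ x y, bd x y ≠ 0 → dim y = dim x + 1
  bd_sq : ∀ x z, ∑ y, bd x y * bd y z = 0

variable {C : Type} [Fintype C] [DecidableEq C]

/-- A filter on a Lefschetz complex: injective on the cells, and increasing
along the facet relation. -/
def IsFilter (L : LC C) (f : C → ℝ) : Prop :=
  (∀ x ∈ L.cells, ∀ y ∈ L.cells, f x = f y → x = y) ∧
  ∀ x y, L.bd x y ≠ 0 → f x < f y

lemma LC.bd_self (L : LC C) (a : C) : L.bd a a = 0 := by
  by_contra h
  have := L.bd_dim a a h
  omega

/-- The boundary map of the quotient after canceling `(s,t)`: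
`∂'(x,y) = ∂(x,y) + ∂(s,y)·∂(x,t)` on the remaining cells, `0` elsewhere. -/
def cancelBd (L : LC C) (s t : C) : C → C → ZMod 2 := fun x y =>
  if x ∈ L.cells \ {s, t} ∧ y ∈ L.cells \ {s, t} then
    L.bd x y + L.bd s y * L.bd x t
  else 0

private lemma zmod2_add_self : ∀ a : ZMod 2, a + a = 0 := by decide

/-- The quotient Lefschetz complex after canceling the facet-cofacet pair `(s,t)`. -/
noncomputable def cancel (L : LC C) (s t : C) : LC C :=
  if hst : L.bd s t = 1 then
    { cells := L.cells \ {s, t}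
      dim := L.dim
      bd := cancelBd L s t
      bd_mem := by
        intro x y h
        unfold cancelBd at h
        split_ifs at h with hc
        · exact hc
        · exact absurd rfl h
      bd_dim := by
        intro x y h
        unfold cancelBd at h
        split_ifs at h with hc
        · by_cases hxy : L.bd x y = 0
          · rw [hxy, zero_add] at h
            have h1 : L.bd s y ≠ 0 := fun hz => by simp [hz] at h
            have h2 : L.bd x t ≠ 0 := fun hz => by simp [hz] at h
            have d1 := L.bd_dim s y h1
            have d2 := L.bd_dim x t h2
            have d3 := L.bd_dim s t (by simp [hst])
            omega
          · exact L.bd_dim x y hxy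
        · exact absurd rfl h
      bd_sq := by
        intro x z
        by_cases hx : x ∈ L.cells \ {s, t}
        swap
        · refine Finset.sum_eq_zero fun y _ => ?_
          unfold cancelBd
          rw [if_neg (fun hc => hx hc.1), zero_mul]
        by_cases hz : z ∈ L.cells \ {s, t}
        swap
        · refine Finset.sum_eq_zero fun y _ => ?_
          have h0 : cancelBd L s t y z = 0 := by
            unfold cancelBd; rw [if_neg (fun hc => hz hc.2)]
          rw [h0, mul_zero]
        have key : ∀ y, cancelBd L s t x y * cancelBd L s t y z =
            (L.bd x y + L.bd s y * L.bd x t) * (L.bd y z + L.bd s z * L.bd y t) := by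
          intro y
          by_cases hy : y ∈ L.cells \ {s, t}
          · unfold cancelBd
            rw [if_pos ⟨hx, hy⟩, if_pos ⟨hy, hz⟩]
          · have lhs0 : cancelBd L s t x y = 0 := by
              unfold cancelBd; rw [if_neg (fun hc => hy hc.2)]
            rw [lhs0, zero_mul]
            by_cases hyc : y ∈ L.cells
            · have hyst : y = s ∨ y = t := by
                simp only [Finset.mem_sdiff, Finset.mem_insert, Finset.mem_singleton] at hy
                tauto
              rcases hyst with rfl | rfl
              · simp [L.bd_self, hst, zmod2_add_self]
              · simp [L.bd_self, hst, zmod2_add_self]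
            · have b1 : L.bd x y = 0 := by
                by_contra hb; exact hyc (L.bd_mem x y hb).2
              have b2 : L.bd s y = 0 := by
                by_contra hb; exact hyc (L.bd_mem s y hb).2
              have b3 : L.bd y z = 0 := by
                by_contra hb; exact hyc (L.bd_mem y z hb).1
              have b4 : L.bd y t = 0 := by
                by_contra hb; exact hyc (L.bd_mem y t hb).1
              rw [b1, b2, b3, b4]
              ring
        rw [Finset.sum_congr rfl fun y _ => key y]
        have expand : ∀ y : C,
            (L.bd x y + L.bd s y * L.bd x t) * (L.bd y z + L.bd s z * L.bd y t) =
            L.bd x y * L.bd y z + L.bd s z * (L.bd x y * L.bd y t)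
              + L.bd x t * (L.bd s y * L.bd y z)
              + L.bd x t * L.bd s z * (L.bd s y * L.bd y t) := by
          intro y; ring
        rw [Finset.sum_congr rfl fun y _ => expand y]
        simp only [Finset.sum_add_distrib, ← Finset.mul_sum, L.bd_sq, mul_zero,
          add_zero, zero_add] }
  else L

/-- The boundary operator on mod-2 chains. -/
noncomputable def bdOp (L : LC C) : (C → ZMod 2) →ₗ[ZMod 2] (C → ZMod 2) where
  toFun c := fun x => ∑ y, L.bd x y * c y
  map_add' a b := by
    funext x
    simp [mul_add, Finset.sum_add_distrib]
  map_smul' m a := by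
    funext x
    simp only [Pi.smul_apply, smul_eq_mul, RingHom.id_apply]
    rw [Finset.mul_sum]
    exact Finset.sum_congr rfl fun y _ => by ring

/-- The `p`-chains of a Lefschetz complex: mod-2 chains supported on cells of
dimension `p`. -/
def chains (L : LC C) (p : ℤ) : Submodule (ZMod 2) (C → ZMod 2) where
  carrier := {c | ∀ x, c x ≠ 0 → x ∈ L.cells ∧ L.dim x = p}
  zero_mem' := by intro x hx; simp at hx
  add_mem' := by
    intro a b ha hb x hx
    by_cases h1 : a x = 0
    · refine hb x fun h2 => hx ?_
      show a x + b x = 0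
      rw [h1, h2, add_zero]
    · exact ha x h1
  smul_mem' := by
    intro m c hc x hx
    refine hc x fun h0 => hx ?_
    show m * c x = 0
    rw [h0, mul_zero]

/-- The `p`-cycles. -/
noncomputable def cycles (L : LC C) (p : ℤ) : Submodule (ZMod 2) (C → ZMod 2) :=
  chains L p ⊓ LinearMap.ker (bdOp L)

/-- The `p`-boundaries. -/
noncomputable def boundaries (L : LC C) (p : ℤ) : Submodule (ZMod 2) (C → ZMod 2) :=
  Submodule.map (bdOp L) (chains L (p + 1))

/-- The mod-2 homology of a Lefschetz complex in dimension `p`. -/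
noncomputable def homology (L : LC C) (p : ℤ) : Type :=
  cycles L p ⧸ (Submodule.comap (cycles L p).subtype (boundaries L p))

noncomputable instance (L : LC C) (p : ℤ) : AddCommGroup (homology L p) :=
  inferInstanceAs (AddCommGroup (cycles L p ⧸
    Submodule.comap (cycles L p).subtype (boundaries L p)))

noncomputable instance (L : LC C) (p : ℤ) : Module (ZMod 2) (homology L p) :=
  inferInstanceAs (Module (ZMod 2) (cycles L p ⧸
    Submodule.comap (cycles L p).subtype (boundaries L p)))

/-- The boundary of the cell `y`, as a chain. -/
def col (L : LC C) (y : C) : C → ZMod 2 := fun x => L.bd x y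

/-- The chain `v` is the boundary of a chain supported on cells with filter
value `< b`. -/
def IsBdryBelow (L : LC C) (f : C → ℝ) (b : ℝ) (v : C → ZMod 2) : Prop :=
  ∃ c : C → ZMod 2, (∀ z, c z ≠ 0 → z ∈ L.cells ∧ f z < b) ∧ bdOp L c = v

/-- The cell `y` gives death: `[∂y] ≠ 0` in the homology of the sublevel set
strictly below `f y`. -/
def givesDeath (L : LC C) (f : C → ℝ) (y : C) : Prop :=
  y ∈ L.cells ∧ ¬ IsBdryBelow L f (f y) (col L y)

/-- The cell `y` gives birth: `[∂y] = 0` in the homology of the sublevel set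
strictly below `f y`. -/
def givesBirth (L : LC C) (f : C → ℝ) (y : C) : Prop :=
  y ∈ L.cells ∧ IsBdryBelow L f (f y) (col L y)

/-- The unique chain supported on death-giving cells below `y` whose boundary
is `∂y` (for birth-giving `y`); junk value otherwise. -/
noncomputable def canChain (L : LC C) (f : C → ℝ) (y : C) : C → ZMod 2 :=
  if h : ∃ c : C → ZMod 2,
      (∀ z, c z ≠ 0 → f z < f y ∧ givesDeath L f z) ∧ bdOp L c = col L y
  then h.choose else 0

/-- The canonical cycle `d_y = y + c_y` of a birth-giving cell `y`. -/
noncomputable def canCycle (L : LC C) (f : C → ℝ) (y : C) : C → ZMod 2 :=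
  Pi.single y 1 + canChain L f y

/-- `v` and `w` are homologous in the sublevel complex strictly below `b`. -/
def HomBelow (L : LC C) (f : C → ℝ) (b : ℝ) (v w : C → ZMod 2) : Prop :=
  ∃ c : C → ZMod 2, (∀ z, c z ≠ 0 → z ∈ L.cells ∧ f z < b) ∧ bdOp L c = v + w

/-- Sorting a finset of cells by increasing filter value (fueled recursion). -/
noncomputable def sortAux (f : C → ℝ) : ℕ → Finset C → List C
  | 0, _ => []
  | n + 1, S =>
    if h : S.Nonempty then
      let m := (Finset.exists_min_image S f h).choose
      m :: sortAux f n (S.erase m)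
    else []

/-- The cells of `L` listed in increasing order of filter value. -/
noncomputable def sortedCells (L : LC C) (f : C → ℝ) : List C :=
  sortAux f L.cells.card L.cells

/-- An element of `S` maximizing `f`, with default value. -/
noncomputable def maxCellD (f : C → ℝ) (S : Finset C) (dflt : C) : C :=
  if h : S.Nonempty then (Finset.exists_max_image S f h).choose else dflt

/-- One step of the persistence pairing algorithm: the state is the pair
(unpaired birth-giving cells, birth-death pairs found so far), and `y` is the
next cell in the filter order.  If `y` gives birth it is added to the unpaired
set; if `y` gives death, the unique subset `A` of the unpaired cells whose
canonical cycles sum to a cycle homologous to `∂y` below `y` is found, and `y`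
is paired with the cell of `A` of maximal filter value. -/
noncomputable def pairStep (L : LC C) (f : C → ℝ) (st : Finset C × Finset (C × C))
    (y : C) : Finset C × Finset (C × C) :=
  if givesBirth L f y then (insert y st.1, st.2)
  else
    let A : Finset C :=
      if h : ∃! A : Finset C, A ⊆ st.1 ∧
          HomBelow L f (f y) (∑ x ∈ A, canCycle L f x) (col L y)
      then h.exists.choose else ∅
    let s := maxCellD f A y
    (st.1.erase s, insert (s, y) st.2)

/-- The state of the persistence pairing after processing all cells. -/
noncomputable def pairState (L : LC C) (f : C → ℝ) : Finset C × Finset (C × C) :=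
  (sortedCells L f).foldl (pairStep L f) (∅, ∅)

/-- The birth-death pairs `BD(f)` of the filter `f`. -/
noncomputable def BD (L : LC C) (f : C → ℝ) : Finset (C × C) :=
  (pairState L f).2

/-- The state of the persistence pairing after processing the cells with
filter value `< b`. -/
noncomputable def stateBelow (L : LC C) (f : C → ℝ) (b : ℝ) :
    Finset C × Finset (C × C) :=
  ((sortedCells L f).filter (fun x => decide (f x < b))).foldl (pairStep L f) (∅, ∅)

/-- The birth-giving cells with value `< b` that are unpaired by the
persistence pairing restricted to the sublevel set below `b`. -/
noncomputable def unpairedBelow (L : LC C) (f : C → ℝ) (b : ℝ) : Finset C :=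
  (stateBelow L f b).1

/-- `(s,t)` is a shallow pair: `s` is the facet of `t` with maximal filter
value and `t` is the cofacet of `s` with minimal filter value. -/
def IsShallow (L : LC C) (f : C → ℝ) (s t : C) : Prop :=
  L.bd s t = 1 ∧ (∀ x, L.bd x t ≠ 0 → f x ≤ f s) ∧ (∀ y, L.bd s y ≠ 0 → f t ≤ f y)

/-- Cancel a list of pairs in sequence. -/
noncomputable def cancelList : LC C → List (C × C) → LC C
  | L, [] => L
  | L, p :: ps => cancelList (cancel L p.1 p.2) ps

/-- The quotient after canceling the first `k` pairs of the sequence `Φ`. -/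
noncomputable def quotAt (L : LC C) {n : ℕ} (Φ : Fin n → C × C) (k : ℕ) : LC C :=
  cancelList L ((List.ofFn Φ).take k)

/-- `Φ` is a shallow order: an enumeration of the birth-death pairs of `f`
such that each pair is shallow for the quotient obtained by canceling all
preceding pairs. -/
def IsShallowOrder (L : LC C) (f : C → ℝ) {n : ℕ} (Φ : Fin n → C × C) : Prop :=
  Function.Injective Φ ∧ (∀ i, Φ i ∈ BD L f) ∧
  ∀ i : Fin n, IsShallow (quotAt L Φ i) f (Φ i).1 (Φ i).2

/-- The depth poset: the intersection of the strict total orders induced on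
`BD(f)` by all shallow orders. -/
def DepthRel (L : LC C) (f : C → ℝ) (φ ψ : C × C) : Prop :=
  φ ∈ BD L f ∧ ψ ∈ BD L f ∧
  ∀ Φ : Fin (BD L f).card → C × C, IsShallowOrder L f Φ →
    ∀ i j : Fin (BD L f).card, Φ i = φ → Φ j = ψ → i < j

/-- The rank of the lower-left minor of the ordered boundary matrix with rows
the cells of filter value `≥ a` and columns the cells of filter value `≤ b`. -/
noncomputable def llRank (L : LC C) (f : C → ℝ) (a b : ℝ) : ℕ :=
  Matrix.rank (Matrix.of fun (x : {x : C // x ∈ L.cells ∧ a ≤ f x})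
    (y : {y : C // y ∈ L.cells ∧ f y ≤ b}) => L.bd x.1 y.1)

/-- `Φ` and `Ψ` differ by transposing two adjacent positions. -/
def AdjSwap {n : ℕ} (Φ Ψ : Fin n → C × C) : Prop :=
  ∃ (k : Fin n) (hk : (k : ℕ) + 1 < n),
    Ψ k = Φ ⟨k + 1, hk⟩ ∧ Ψ ⟨k + 1, hk⟩ = Φ k ∧
    ∀ i : Fin n, i ≠ k → i ≠ ⟨k + 1, hk⟩ → Ψ i = Φ i

/-! ### Auxiliary development for Statement 3 -/

section Aux
open scoped symmDiff
set_option linter.unusedSectionVars false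

variable (L : LC C) (f : C → ℝ)

private lemma zmod2_cases (a : ZMod 2) : a = 0 ∨ a = 1 := by revert a; decide

private lemma fun_add_self (g : C → ZMod 2) : g + g = 0 :=
  funext fun x => zmod2_add_self (g x)

lemma bdOp_apply (c : C → ZMod 2) (x : C) : bdOp L c x = ∑ u, L.bd x u * c u := rfl

lemma bdOp_single (y : C) : bdOp L (Pi.single y (1 : ZMod 2)) = col L y := by
  funext x
  rw [bdOp_apply]
  simp [Pi.single_apply, mul_ite, col]

lemma bdOp_col (y : C) : bdOp L (col L y) = 0 := by
  funext x
  exact L.bd_sq x y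

lemma not_death_of_birth {z : C} (h : givesBirth L f z) : ¬ givesDeath L f z :=
  fun hd => hd.2 h.2

lemma birth_of_not_death {z : C} (hz : z ∈ L.cells) (h : ¬ givesDeath L f z) :
    givesBirth L f z :=
  ⟨hz, by by_contra h'; exact h ⟨hz, h'⟩⟩

lemma bdOp_eval_top (hf : IsFilter L f) (c : C → ZMod 2) (x : C)
    (h : ∀ u, c u ≠ 0 → f u ≤ f x) : bdOp L c x = 0 := by
  rw [bdOp_apply]
  apply Finset.sum_eq_zero
  intro u _
  by_cases h1 : c u = 0
  · rw [h1, mul_zero]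
  · by_cases h2 : L.bd x u = 0
    · rw [h2, zero_mul]
    · exact absurd (hf.2 x u h2) (not_lt.mpr (h u h1))


/-- Improve a witness chain to a death-supported chain, by eliminating
non-death cells from the support one by one. -/
private lemma improve_chain (hf : IsFilter L f) (y : C)
    (IH : ∀ x, givesBirth L f x → f x < f y →
      ∃ e : C → ZMod 2, (∀ z, e z ≠ 0 → f z < f x ∧ givesDeath L f z) ∧
        bdOp L e = col L x) :
    ∀ n (c : C → ZMod 2), (∀ z, c z ≠ 0 → z ∈ L.cells ∧ f z < f y) →
      bdOp L c = col L y →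
      (Finset.univ.filter (fun z => c z ≠ 0 ∧ ¬ givesDeath L f z)).card ≤ n →
      ∃ c' : C → ZMod 2, (∀ z, c' z ≠ 0 → f z < f y ∧ givesDeath L f z) ∧
        bdOp L c' = col L y := by
  intro n
  induction n with
  | zero =>
    intro c hc hbd hcard
    refine ⟨c, fun z hz => ⟨(hc z hz).2, ?_⟩, hbd⟩
    by_contra hnd
    have : z ∈ Finset.univ.filter (fun z => c z ≠ 0 ∧ ¬ givesDeath L f z) := by
      simp [hz, hnd]
    have hcard0 : (Finset.univ.filter (fun z => c z ≠ 0 ∧ ¬ givesDeath L f z)) = ∅ :=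
      Finset.card_eq_zero.mp (Nat.le_zero.mp hcard)
    simp [hcard0] at this
  | succ n ih =>
    intro c hc hbd hcard
    by_cases hemp : (Finset.univ.filter (fun z => c z ≠ 0 ∧ ¬ givesDeath L f z)) = ∅
    · refine ⟨c, fun z hz => ⟨(hc z hz).2, ?_⟩, hbd⟩
      by_contra hnd
      have : z ∈ Finset.univ.filter (fun z => c z ≠ 0 ∧ ¬ givesDeath L f z) := by
        simp [hz, hnd]
      simp [hemp] at this
    · obtain ⟨x, hx⟩ := Finset.nonempty_iff_ne_empty.mpr hemp
      rw [Finset.mem_filter] at hx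
      obtain ⟨-, hcx, hndx⟩ := hx
      have hxcell : x ∈ L.cells := (hc x hcx).1
      have hxlt : f x < f y := (hc x hcx).2
      have hbx : givesBirth L f x := birth_of_not_death L f hxcell hndx
      obtain ⟨e, he, hebd⟩ := IH x hbx hxlt
      set c' : C → ZMod 2 := c + Pi.single x 1 + e with hc'def
      have hex0 : e x = 0 := by
        by_contra h; exact hndx (he x h).2
      have hbd' : bdOp L c' = col L y := by
        rw [hc'def, map_add, map_add, hbd, bdOp_single, hebd]
        funext w
        simp only [Pi.add_apply]
        have := zmod2_add_self (col L x w)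
        rw [add_assoc]
        rw [this, add_zero]
      have hsupp' : ∀ z, c' z ≠ 0 → z ∈ L.cells ∧ f z < f y := by
        intro z hz
        by_cases h1 : e z ≠ 0
        · have := he z h1
          exact ⟨this.2.1, lt_trans this.1 hxlt⟩
        · by_cases h2 : z = x
          · exact ⟨h2 ▸ hxcell, h2 ▸ hxlt⟩
          · apply hc z
            intro h3
            apply hz
            rw [hc'def]
            simp only [Pi.add_apply, Pi.single_apply, if_neg (fun h => h2 h), h3]
            push_neg at h1
            rw [h1, add_zero, add_zero]
      have hsub : (Finset.univ.filter (fun z => c' z ≠ 0 ∧ ¬ givesDeath L f z)) ⊆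
          (Finset.univ.filter (fun z => c z ≠ 0 ∧ ¬ givesDeath L f z)).erase x := by
        intro z hz
        rw [Finset.mem_filter] at hz
        obtain ⟨-, hz1, hz2⟩ := hz
        have hez : e z = 0 := by
          by_contra h; exact hz2 (he z h).2
        by_cases h2 : z = x
        · exfalso
          apply hz1
          rw [hc'def, h2]
          simp only [Pi.add_apply, Pi.single_apply, if_pos rfl, hex0, add_zero]
          rcases zmod2_cases (c x) with h | h
          · exact absurd h hcx
          · rw [h]; decide
        · rw [Finset.mem_erase, Finset.mem_filter]
          refine ⟨h2, Finset.mem_univ z, ?_, hz2⟩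
          intro h3
          apply hz1
          rw [hc'def]
          simp only [Pi.add_apply, Pi.single_apply, if_neg (fun h => h2 h), h3, hez,
            add_zero, zero_add]
      apply ih c' hsupp' hbd'
      calc (Finset.univ.filter (fun z => c' z ≠ 0 ∧ ¬ givesDeath L f z)).card
          ≤ ((Finset.univ.filter (fun z => c z ≠ 0 ∧ ¬ givesDeath L f z)).erase x).card :=
            Finset.card_le_card hsub
        _ ≤ n := by
            have hxmem : x ∈ Finset.univ.filter (fun z => c z ≠ 0 ∧ ¬ givesDeath L f z) := by
              simp [hcx, hndx]
            rw [Finset.card_erase_of_mem hxmem]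
            omega

/-- Every birth-giving cell admits a chain supported on death-giving cells
strictly below it whose boundary is its boundary. -/
lemma exists_death_chain (hf : IsFilter L f) :
    ∀ N y, givesBirth L f y → (L.cells.filter (fun z => f z < f y)).card ≤ N →
      ∃ c : C → ZMod 2, (∀ z, c z ≠ 0 → f z < f y ∧ givesDeath L f z) ∧
        bdOp L c = col L y := by
  intro N
  induction N with
  | zero =>
    intro y hy hcard
    obtain ⟨c, hc, hbd⟩ := hy.2
    apply improve_chain L f hf y ?_ _ c hc hbd le_rfl
    intro x hx hlt
    exfalso
    have : x ∈ L.cells.filter (fun z => f z < f y) := by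
      simp [hx.1, hlt]
    have hcard0 : (L.cells.filter (fun z => f z < f y)) = ∅ :=
      Finset.card_eq_zero.mp (Nat.le_zero.mp hcard)
    simp [hcard0] at this
  | succ N ih =>
    intro y hy hcard
    obtain ⟨c, hc, hbd⟩ := hy.2
    apply improve_chain L f hf y ?_ _ c hc hbd le_rfl
    intro x hx hlt
    apply ih x hx
    have hxmem : x ∈ L.cells.filter (fun z => f z < f y) := by
      simp [hx.1, hlt]
    have hsub : L.cells.filter (fun z => f z < f x) ⊆
        (L.cells.filter (fun z => f z < f y)).erase x := by
      intro z hz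
      rw [Finset.mem_filter] at hz
      rw [Finset.mem_erase, Finset.mem_filter]
      refine ⟨?_, hz.1, lt_trans hz.2 hlt⟩
      intro h
      subst h
      exact lt_irrefl _ hz.2
    calc (L.cells.filter (fun z => f z < f x)).card
        ≤ ((L.cells.filter (fun z => f z < f y)).erase x).card := Finset.card_le_card hsub
      _ ≤ N := by rw [Finset.card_erase_of_mem hxmem]; omega

lemma canChain_spec (hf : IsFilter L f) {y : C} (hy : givesBirth L f y) :
    (∀ z, canChain L f y z ≠ 0 → f z < f y ∧ givesDeath L f z) ∧
      bdOp L (canChain L f y) = col L y := by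
  have hex : ∃ c : C → ZMod 2,
      (∀ z, c z ≠ 0 → f z < f y ∧ givesDeath L f z) ∧ bdOp L c = col L y :=
    exists_death_chain L f hf _ y hy le_rfl
  rw [canChain, dif_pos hex]
  exact hex.choose_spec

lemma canChain_support (y z : C) (hz : canChain L f y z ≠ 0) :
    f z < f y ∧ givesDeath L f z := by
  rw [canChain] at hz
  split_ifs at hz with hex
  · exact hex.choose_spec.1 z hz
  · simp at hz

lemma canCycle_bd (hf : IsFilter L f) {y : C} (hy : givesBirth L f y) :
    bdOp L (canCycle L f y) = 0 := by
  rw [canCycle, map_add, bdOp_single, (canChain_spec L f hf hy).2]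
  exact fun_add_self _

lemma canCycle_support {y : C} (hy : givesBirth L f y) {z : C}
    (hz : canCycle L f y z ≠ 0) : z ∈ L.cells ∧ f z ≤ f y := by
  rw [canCycle] at hz
  simp only [Pi.add_apply] at hz
  by_cases h2 : z = y
  · exact ⟨h2 ▸ hy.1, le_of_eq (by rw [h2])⟩
  · have h1 : canChain L f y z ≠ 0 := by
      intro h
      apply hz
      rw [h, Pi.single_apply, if_neg h2, add_zero]
    have := canChain_support L f y z h1
    exact ⟨this.2.1, le_of_lt this.1⟩

lemma canCycle_eval_nondeath {z : C} (hnd : ¬ givesDeath L f z) (y : C) :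
    canCycle L f y z = if z = y then 1 else 0 := by
  have h0 : canChain L f y z = 0 := by
    by_contra h; exact hnd (canChain_support L f y z h).2
  rw [canCycle]
  simp only [Pi.add_apply, Pi.single_apply, h0, add_zero]

lemma sum_canCycle_eval {A : Finset C} {m : C} (hnd : ¬ givesDeath L f m) :
    (∑ x ∈ A, canCycle L f x) m = if m ∈ A then 1 else 0 := by
  rw [Finset.sum_apply]
  rw [Finset.sum_congr rfl (fun x _ => canCycle_eval_nondeath L f hnd x)]
  simp

lemma sum_canCycle_support {A : Finset C} (hA : ∀ x ∈ A, givesBirth L f x) {B : ℝ}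
    (hB : ∀ x ∈ A, f x ≤ B) {z : C} (hz : (∑ x ∈ A, canCycle L f x) z ≠ 0) :
    z ∈ L.cells ∧ f z ≤ B := by
  rw [Finset.sum_apply] at hz
  obtain ⟨x, hx, hne⟩ := Finset.exists_ne_zero_of_sum_ne_zero hz
  have := canCycle_support L f (hA x hx) hne
  exact ⟨this.1, le_trans this.2 (hB x hx)⟩

lemma sum_symmDiff_fun (A B : Finset C) (v : C → (C → ZMod 2)) :
    ∑ x ∈ A ∆ B, v x = (∑ x ∈ A, v x) + ∑ x ∈ B, v x := by
  have key : ∀ S : Finset C, ∑ x ∈ S, v x = ∑ x : C, if x ∈ S then v x else 0 := by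
    intro S
    rw [Finset.sum_ite_mem, Finset.univ_inter]
  rw [key, key A, key B, ← Finset.sum_add_distrib]
  apply Finset.sum_congr rfl
  intro x _
  by_cases hA : x ∈ A <;> by_cases hB : x ∈ B
  · rw [if_neg (by simp [Finset.mem_symmDiff, hA, hB]), if_pos hA, if_pos hB]
    exact (fun_add_self (v x)).symm
  · rw [if_pos (by simp [Finset.mem_symmDiff, hA, hB]), if_pos hA, if_neg hB, add_zero]
  · rw [if_pos (by simp [Finset.mem_symmDiff, hA, hB]), if_neg hA, if_pos hB, zero_add]
  · rw [if_neg (by simp [Finset.mem_symmDiff, hA, hB]), if_neg hA, if_neg hB, add_zero]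


/-! ### Sorting lemmas -/

lemma sortAux_succ (n : ℕ) (S : Finset C) (h : S.Nonempty) :
    sortAux f (n+1) S = (Finset.exists_min_image S f h).choose ::
      sortAux f n (S.erase (Finset.exists_min_image S f h).choose) := by
  rw [sortAux, dif_pos h]

lemma sortAux_spec (hinj : ∀ x ∈ L.cells, ∀ y ∈ L.cells, f x = f y → x = y) :
    ∀ n (S : Finset C), S.card = n → S ⊆ L.cells →
      (∀ x, x ∈ sortAux f n S ↔ x ∈ S) ∧
        (sortAux f n S).Pairwise (fun a b => f a < f b) := by
  intro n
  induction n with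
  | zero =>
    intro S hcard _
    have : S = ∅ := Finset.card_eq_zero.mp hcard
    subst this
    rw [sortAux]
    exact ⟨fun x => by simp, List.Pairwise.nil⟩
  | succ n ih =>
    intro S hcard hsub
    have hne : S.Nonempty := by rw [← Finset.card_pos, hcard]; omega
    rw [sortAux_succ f n S hne]
    obtain ⟨hmS, hmin⟩ := (Finset.exists_min_image S f hne).choose_spec
    set m := (Finset.exists_min_image S f hne).choose with hmdef
    have hcard' : (S.erase m).card = n := by
      rw [Finset.card_erase_of_mem hmS, hcard]
      omega
    obtain ⟨hmem, hpw⟩ := ih (S.erase m) hcard'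
      (fun x hx => hsub (Finset.mem_of_mem_erase hx))
    constructor
    · intro x
      simp only [List.mem_cons, hmem, Finset.mem_erase]
      constructor
      · rintro (rfl | ⟨-, hx⟩)
        · exact hmS
        · exact hx
      · intro hx
        by_cases hxm : x = m
        · exact Or.inl hxm
        · exact Or.inr ⟨hxm, hx⟩
    · refine List.Pairwise.cons ?_ hpw
      intro b hb
      obtain ⟨hbm, hbS⟩ := Finset.mem_erase.1 ((hmem b).1 hb)
      rcases lt_or_eq_of_le (hmin b hbS) with hlt | heq
      · exact hlt
      · exact absurd (hinj m (hsub hmS) b (hsub hbS) heq) (fun h => hbm h.symm)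

lemma sortedCells_spec (hinj : ∀ x ∈ L.cells, ∀ y ∈ L.cells, f x = f y → x = y) :
    (∀ x, x ∈ sortedCells L f ↔ x ∈ L.cells) ∧
      (sortedCells L f).Pairwise (fun a b => f a < f b) :=
  sortAux_spec L f hinj L.cells.card L.cells rfl (le_refl _)

/-! ### The algorithm invariant -/

/-- The invariant of the persistence pairing algorithm: `P` is the set of
processed cells and `Y` the set of unpaired birth-giving cells. -/
structure PairInv (P Y : Finset C) : Prop where
  subP : Y ⊆ P
  cellsP : ∀ x ∈ P, x ∈ L.cells
  birthY : ∀ x ∈ Y, givesBirth L f x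
  span : ∀ z : C → ZMod 2, (∀ w, z w ≠ 0 → w ∈ P) → bdOp L z = 0 →
    ∃ A : Finset C, A ⊆ Y ∧ ∃ c : C → ZMod 2, (∀ w, c w ≠ 0 → w ∈ P) ∧
      bdOp L c = z + ∑ x ∈ A, canCycle L f x
  low : ∀ m ∈ Y, ∀ c : C → ZMod 2, (∀ w, c w ≠ 0 → w ∈ P) →
    (∀ x, bdOp L c x ≠ 0 → f x ≤ f m) → bdOp L c m = 0
  paired : ∀ x ∈ P, givesBirth L f x → x ∉ Y → ∃ u A c, u ∈ P ∧ x ∈ A ∧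
    (∀ x' ∈ A, givesBirth L f x' ∧ f x' < f u) ∧
    (∀ w, c w ≠ 0 → w ∈ L.cells ∧ f w < f u) ∧
    bdOp L c = (∑ x' ∈ A, canCycle L f x') + col L u

lemma pairInv_indep {P Y : Finset C} (hI : PairInv L f P Y) {A : Finset C}
    (hA : A ⊆ Y) (c : C → ZMod 2) (hc : ∀ w, c w ≠ 0 → w ∈ P)
    (hbd : bdOp L c = ∑ x ∈ A, canCycle L f x) : A = ∅ := by
  by_contra hne
  obtain ⟨m, hmA, hmax⟩ :=
    Finset.exists_max_image A f (Finset.nonempty_iff_ne_empty.mpr hne)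
  have hbirthA : ∀ x ∈ A, givesBirth L f x := fun x hx => hI.birthY x (hA hx)
  have h0 := hI.low m (hA hmA) c hc (fun x hx => by
    rw [hbd] at hx
    exact (sum_canCycle_support L f hbirthA hmax hx).2)
  rw [hbd, sum_canCycle_eval L f (not_death_of_birth L f (hbirthA m hmA)),
    if_pos hmA] at h0
  exact one_ne_zero h0

lemma maxCellD_spec {A : Finset C} (hne : A.Nonempty) (y : C) :
    maxCellD f A y ∈ A ∧ ∀ b ∈ A, f b ≤ f (maxCellD f A y) := by
  rw [maxCellD, dif_pos hne]
  exact (Finset.exists_max_image A f hne).choose_spec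

/-- Splitting off the `y`-component of a chain. -/
lemma split_at (y : C) (c : C → ZMod 2) :
    ∃ c₁ : C → ZMod 2, (∀ w, c₁ w ≠ 0 → c w ≠ 0 ∧ w ≠ y) ∧
      (c = c₁ ∨ c = c₁ + Pi.single y 1) := by
  refine ⟨fun w => if w = y then 0 else c w, ?_, ?_⟩
  · intro w hw
    by_cases h : w = y
    · simp [h] at hw
    · exact ⟨by simpa [h] using hw, h⟩
  · rcases zmod2_cases (c y) with h | h
    · left
      funext w
      by_cases hw : w = y
      · simp [hw, h]
      · simp [hw]
    · right
      funext w
      by_cases hw : w = y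
      · simp [hw, h, Pi.single_apply]
      · simp [hw, Pi.single_apply]

/-- Existence and uniqueness of the subset `A` in the death step. -/
lemma death_EU (hf : IsFilter L f) {P Y : Finset C} {y : C} (hI : PairInv L f P Y)
    (hy : givesDeath L f y) (hPlt : ∀ x ∈ P, f x < f y)
    (hPfull : ∀ z ∈ L.cells, f z < f y → z ∈ P) :
    ∃! A : Finset C, A ⊆ Y ∧
      HomBelow L f (f y) (∑ x ∈ A, canCycle L f x) (col L y) := by
  have hcolsupp : ∀ w, col L y w ≠ 0 → w ∈ P := fun w hw =>
    hPfull w (L.bd_mem w y hw).1 (hf.2 w y hw)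
  obtain ⟨A, hA, c, hc, hbd⟩ := hI.span (col L y) hcolsupp (bdOp_col L y)
  refine ⟨A, ⟨hA, c, fun w hw => ⟨hI.cellsP w (hc w hw), hPlt w (hc w hw)⟩,
    by rw [hbd, add_comm]⟩, ?_⟩
  rintro A' ⟨hA', c', hc', hbd'⟩
  have hcP : ∀ w, c' w ≠ 0 → w ∈ P := fun w hw =>
    hPfull w (hc' w hw).1 (hc' w hw).2
  have hdiff : A' ∆ A = ∅ := by
    apply pairInv_indep L f hI (fun x hx => by
      rcases Finset.mem_symmDiff.1 hx with ⟨h1, -⟩ | ⟨h1, -⟩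
      · exact hA' h1
      · exact hA h1) (c' + c)
      (fun w hw => by
        rcases zmod2_cases (c' w) with h | h
        · apply hc w
          intro h2
          apply hw
          simp [Pi.add_apply, h, h2]
        · exact hcP w (by rw [h]; exact one_ne_zero))
    rw [map_add, hbd', hbd, sum_symmDiff_fun]
    funext w
    simp only [Pi.add_apply]
    have ha := zmod2_add_self (col L y w)
    have : ∀ a b c d : ZMod 2, a + b + (b + c) = a + c := by decide
    exact this _ _ _ 0
  have := symmDiff_eq_bot.mp hdiff
  exact this


/-! ### The pairing algorithm preserves the invariant -/

lemma pairStep_fst_birth (st : Finset C × Finset (C × C)) {y : C}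
    (hb : givesBirth L f y) : (pairStep L f st y).1 = insert y st.1 := by
  rw [pairStep, if_pos hb]

lemma pairStep_death (st : Finset C × Finset (C × C)) {y : C}
    (hb : ¬ givesBirth L f y)
    (hEU : ∃! A : Finset C, A ⊆ st.1 ∧
      HomBelow L f (f y) (∑ x ∈ A, canCycle L f x) (col L y)) :
    pairStep L f st y =
      (st.1.erase (maxCellD f hEU.exists.choose y),
        insert (maxCellD f hEU.exists.choose y, y) st.2) := by
  rw [pairStep, if_neg hb]
  simp only [dif_pos hEU]

private lemma z2b : ∀ a e ch S : ZMod 2, a + ch + S = a + e + (e + ch + S) := by decide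
private lemma z2c : ∀ a b d e : ZMod 2, a + (b + d) = a + b + (d + e) + e := by decide
private lemma z2d : ∀ a b : ZMod 2, a + b = 0 → a = b := by decide
private lemma z2e : ∀ a S : ZMod 2, a + (S + a) = S := by decide
private lemma z2f : ∀ b y S : ZMod 2, b + y = b + (S + y) + S := by decide

lemma pairInv_step (hf : IsFilter L f) {P : Finset C}
    (st : Finset C × Finset (C × C)) (hI : PairInv L f P st.1) {y : C}
    (hyc : y ∈ L.cells) (hyP : y ∉ P)
    (hPlt : ∀ x ∈ P, f x < f y) (hPfull : ∀ z ∈ L.cells, f z < f y → z ∈ P) :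
    PairInv L f (insert y P) (pairStep L f st y).1 := by
  have hSupp : ∀ c : C → ZMod 2, (∀ w, c w ≠ 0 → w ∈ L.cells ∧ f w < f y) →
      ∀ w, c w ≠ 0 → w ∈ P := fun c hc w hw => hPfull w (hc w hw).1 (hc w hw).2
  have hbd_at_y : ∀ c : C → ZMod 2, (∀ w, c w ≠ 0 → w ∈ P) → bdOp L c y = 0 :=
    fun c hc => bdOp_eval_top L f hf c y
      (fun u hu => le_of_lt (hPlt u (hc u hu)))
  by_cases hb : givesBirth L f y
  · -- birth case
    rw [pairStep_fst_birth L f st hb]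
    constructor
    · exact Finset.insert_subset_insert y hI.subP
    · intro x hx
      rcases Finset.mem_insert.1 hx with rfl | hx
      · exact hyc
      · exact hI.cellsP x hx
    · intro x hx
      rcases Finset.mem_insert.1 hx with rfl | hx
      · exact hb
      · exact hI.birthY x hx
    · -- span
      intro z hz hzbd
      obtain ⟨z₁, hz₁, hsplt⟩ := split_at y z
      have hz₁P : ∀ w, z₁ w ≠ 0 → w ∈ P := by
        intro w hw
        rcases Finset.mem_insert.1 (hz w (hz₁ w hw).1) with h | h
        · exact absurd h (hz₁ w hw).2
        · exact h
      rcases hsplt with hzeq | hzeq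
      · -- z does not contain y
        obtain ⟨A, hA, c, hc, hcbd⟩ := hI.span z₁ hz₁P (by rw [← hzeq]; exact hzbd)
        exact ⟨A, subset_trans hA (Finset.subset_insert y st.1), c,
          fun w hw => Finset.mem_insert_of_mem (hc w hw),
          by rw [hzeq]; exact hcbd⟩
      · -- z = z₁ + single y
        have hz₁bd : bdOp L z₁ = col L y := by
          have h1 : bdOp L z₁ + col L y = 0 := by
            rw [← bdOp_single L y, ← map_add, ← hzeq]; exact hzbd
          funext w
          exact z2d _ _ (congrFun h1 w)
        have hcycle : bdOp L (z₁ + canChain L f y) = 0 := by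
          rw [map_add, hz₁bd, (canChain_spec L f hf hb).2]
          exact fun_add_self _
        have hsuppcyc : ∀ w, (z₁ + canChain L f y) w ≠ 0 → w ∈ P := by
          intro w hw
          rcases zmod2_cases (z₁ w) with h1 | h1
          · have h2 : canChain L f y w ≠ 0 := by
              intro h; apply hw; simp [Pi.add_apply, h1, h]
            have h3 := canChain_support L f y w h2
            exact hPfull w h3.2.1 h3.1
          · exact hz₁P w (by rw [h1]; exact one_ne_zero)
        obtain ⟨A, hA, c, hc, hcbd⟩ := hI.span _ hsuppcyc hcycle
        have hyA : y ∉ A := fun h => hyP (hI.subP (hA h))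
        refine ⟨insert y A, Finset.insert_subset_insert y hA, c,
          fun w hw => Finset.mem_insert_of_mem (hc w hw), ?_⟩
        rw [hzeq, Finset.sum_insert hyA, canCycle, hcbd]
        funext w
        simp only [Pi.add_apply]
        exact z2b _ _ _ _
    · -- low
      intro m hm c hc hbound
      obtain ⟨c₁, hc₁, hsplt⟩ := split_at y c
      have hc₁P : ∀ w, c₁ w ≠ 0 → w ∈ P := by
        intro w hw
        rcases Finset.mem_insert.1 (hc w (hc₁ w hw).1) with h | h
        · exact absurd h (hc₁ w hw).2
        · exact h
      obtain ⟨e, he, hebd⟩ := hb.2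
      have heP : ∀ w, e w ≠ 0 → w ∈ P := hSupp e he
      obtain ⟨c₂, hc₂P, hc₂bd⟩ :
          ∃ c₂ : C → ZMod 2, (∀ w, c₂ w ≠ 0 → w ∈ P) ∧ bdOp L c₂ = bdOp L c := by
        rcases hsplt with hceq | hceq
        · exact ⟨c₁, hc₁P, by rw [hceq]⟩
        · refine ⟨c₁ + e, ?_, ?_⟩
          · intro w hw
            rcases zmod2_cases (c₁ w) with h1 | h1
            · exact heP w (by intro h; apply hw; simp [Pi.add_apply, h1, h])
            · exact hc₁P w (by rw [h1]; exact one_ne_zero)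
          · rw [map_add, hebd, hceq, map_add, bdOp_single]
      rcases Finset.mem_insert.1 hm with rfl | hm
      · rw [← hc₂bd]
        exact hbd_at_y c₂ hc₂P
      · rw [← hc₂bd]
        exact hI.low m hm c₂ hc₂P (fun x hx => hbound x (by rwa [← hc₂bd]))
    · -- paired
      intro x hx hbx hxnot
      have hxy : x ≠ y := fun h => hxnot (h ▸ Finset.mem_insert_self y st.1)
      have hxP : x ∈ P := by
        rcases Finset.mem_insert.1 hx with h | h
        · exact absurd h hxy
        · exact h
      have hxY : x ∉ st.1 := fun h => hxnot (Finset.mem_insert_of_mem h)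
      obtain ⟨u, A, c, huP, hrest⟩ := hI.paired x hxP hbx hxY
      exact ⟨u, A, c, Finset.mem_insert_of_mem huP, hrest⟩
  · -- death case
    have hyd : givesDeath L f y := ⟨hyc, fun h => hb ⟨hyc, h⟩⟩
    have hEU := death_EU L f hf hI hyd hPlt hPfull
    rw [pairStep_death L f st hb hEU]
    set A₀ := hEU.exists.choose with hA₀def
    have hA₀spec := hEU.exists.choose_spec
    have hA₀Y : A₀ ⊆ st.1 := hA₀spec.1
    obtain ⟨c₀, hc₀, hc₀bd⟩ : ∃ c : C → ZMod 2,
        (∀ z, c z ≠ 0 → z ∈ L.cells ∧ f z < f y) ∧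
          bdOp L c = (∑ x ∈ A₀, canCycle L f x) + col L y := hA₀spec.2
    have hc₀P : ∀ w, c₀ w ≠ 0 → w ∈ P := hSupp c₀ hc₀
    have hA₀birth : ∀ x ∈ A₀, givesBirth L f x := fun x hx => hI.birthY x (hA₀Y hx)
    have hA₀ne : A₀.Nonempty := by
      rw [Finset.nonempty_iff_ne_empty]
      intro h
      apply hyd.2
      refine ⟨c₀, hc₀, ?_⟩
      rw [hc₀bd, h, Finset.sum_empty, zero_add]
    obtain ⟨hm₀A, hm₀max⟩ := maxCellD_spec f hA₀ne y
    set m₀ := maxCellD f A₀ y with hm₀def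
    have hm₀Y : m₀ ∈ st.1 := hA₀Y hm₀A
    have hm₀b : givesBirth L f m₀ := hI.birthY m₀ hm₀Y
    show PairInv L f (insert y P) (st.1.erase m₀)
    constructor
    · exact subset_trans (Finset.erase_subset m₀ st.1)
        (subset_trans hI.subP (Finset.subset_insert y P))
    · intro x hx
      rcases Finset.mem_insert.1 hx with rfl | hx
      · exact hyc
      · exact hI.cellsP x hx
    · intro x hx
      exact hI.birthY x (Finset.mem_of_mem_erase hx)
    · -- span
      intro z hz hzbd
      obtain ⟨z₁, hz₁, hsplt⟩ := split_at y z
      have hz₁P : ∀ w, z₁ w ≠ 0 → w ∈ P := by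
        intro w hw
        rcases Finset.mem_insert.1 (hz w (hz₁ w hw).1) with h | h
        · exact absurd h (hz₁ w hw).2
        · exact h
      rcases hsplt with hzeq | hzeq
      · -- z does not contain y
        obtain ⟨B, hB, c₁, hc₁, hc₁bd⟩ := hI.span z₁ hz₁P (by rw [← hzeq]; exact hzbd)
        by_cases hm₀B : m₀ ∈ B
        · refine ⟨B ∆ A₀, ?_, c₁ + c₀ + Pi.single y 1, ?_, ?_⟩
          · intro x hx
            rcases Finset.mem_symmDiff.1 hx with ⟨h1, h2⟩ | ⟨h1, h2⟩
            · exact Finset.mem_erase.2 ⟨fun h => h2 (h ▸ hm₀A), hB h1⟩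
            · exact Finset.mem_erase.2 ⟨fun h => h2 (h ▸ hm₀B), hA₀Y h1⟩
          · intro w hw
            by_cases hwy : w = y
            · exact hwy ▸ Finset.mem_insert_self y P
            · apply Finset.mem_insert_of_mem
              rcases zmod2_cases (c₁ w) with h1 | h1
              · rcases zmod2_cases (c₀ w) with h2 | h2
                · exfalso
                  apply hw
                  simp [Pi.add_apply, h1, h2, Pi.single_apply, hwy]
                · exact hc₀P w (by rw [h2]; exact one_ne_zero)
              · exact hc₁ w (by rw [h1]; exact one_ne_zero)
          · rw [hzeq, map_add, map_add, bdOp_single, hc₁bd, hc₀bd, sum_symmDiff_fun]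
            funext w
            simp only [Pi.add_apply]
            exact (z2c _ _ _ _).symm
        · exact ⟨B, fun x hx => Finset.mem_erase.2 ⟨fun h => hm₀B (h ▸ hx), hB hx⟩,
            c₁, fun w hw => Finset.mem_insert_of_mem (hc₁ w hw),
            by rw [hzeq]; exact hc₁bd⟩
      · -- z contains y : impossible
        exfalso
        have hz₁bd : bdOp L z₁ = col L y := by
          have h1 : bdOp L z₁ + col L y = 0 := by
            rw [← bdOp_single L y, ← map_add, ← hzeq]; exact hzbd
          funext w
          exact z2d _ _ (congrFun h1 w)
        have hA₀emp : A₀ = ∅ := by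
          apply pairInv_indep L f hI hA₀Y (z₁ + c₀)
          · intro w hw
            rcases zmod2_cases (z₁ w) with h1 | h1
            · exact hc₀P w (by intro h; apply hw; simp [Pi.add_apply, h1, h])
            · exact hz₁P w (by rw [h1]; exact one_ne_zero)
          · rw [map_add, hz₁bd, hc₀bd]
            funext w
            simp only [Pi.add_apply]
            exact z2e _ _
        exact Finset.nonempty_iff_ne_empty.mp hA₀ne hA₀emp
    · -- low
      intro m hm c hc hbound
      have hm' : m ∈ st.1 := Finset.mem_of_mem_erase hm
      have hmne : m ≠ m₀ := (Finset.mem_erase.1 hm).1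
      have hmb : givesBirth L f m := hI.birthY m hm'
      obtain ⟨c₁, hc₁, hsplt⟩ := split_at y c
      have hc₁P : ∀ w, c₁ w ≠ 0 → w ∈ P := by
        intro w hw
        rcases Finset.mem_insert.1 (hc w (hc₁ w hw).1) with h | h
        · exact absurd h (hc₁ w hw).2
        · exact h
      rcases hsplt with hceq | hceq
      · rw [hceq] at hbound ⊢
        exact hI.low m hm' c₁ hc₁P hbound
      · have hkey : bdOp L c = bdOp L (c₁ + c₀) + ∑ x ∈ A₀, canCycle L f x := by
          rw [hceq, map_add, map_add, bdOp_single, hc₀bd]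
          funext w
          simp only [Pi.add_apply]
          exact z2f _ _ _
        have hc₁₀P : ∀ w, (c₁ + c₀) w ≠ 0 → w ∈ P := by
          intro w hw
          rcases zmod2_cases (c₁ w) with h1 | h1
          · exact hc₀P w (by intro h; apply hw; simp [Pi.add_apply, h1, h])
          · exact hc₁P w (by rw [h1]; exact one_ne_zero)
        have hmcell : m ∈ L.cells := hI.cellsP m (hI.subP hm')
        have hm₀cell : m₀ ∈ L.cells := hI.cellsP m₀ (hI.subP hm₀Y)
        have hfne : f m ≠ f m₀ := fun h => hmne (hf.1 m hmcell m₀ hm₀cell h)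
        by_cases hcmp : f m₀ < f m
        · have hmA₀ : m ∉ A₀ := fun h => absurd (hm₀max m h) (not_le.mpr hcmp)
          have hWbound : ∀ x, bdOp L (c₁ + c₀) x ≠ 0 → f x ≤ f m := by
            intro x hx
            rcases zmod2_cases ((∑ x' ∈ A₀, canCycle L f x') x) with h1 | h1
            · apply hbound x
              rw [hkey, Pi.add_apply, h1, add_zero]
              exact hx
            · exact le_trans
                (sum_canCycle_support L f hA₀birth hm₀max
                  (by rw [h1]; exact one_ne_zero)).2 (le_of_lt hcmp)
          have hW0 := hI.low m hm' (c₁ + c₀) hc₁₀P hWbound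
          rw [hkey, Pi.add_apply, hW0,
            sum_canCycle_eval L f (not_death_of_birth L f hmb), if_neg hmA₀, add_zero]
        · have hcmp' : f m < f m₀ := lt_of_le_of_ne (not_lt.mp hcmp) hfne
          exfalso
          have hWbound : ∀ x, bdOp L (c₁ + c₀) x ≠ 0 → f x ≤ f m₀ := by
            intro x hx
            rcases zmod2_cases ((∑ x' ∈ A₀, canCycle L f x') x) with h1 | h1
            · have h2 : bdOp L c x ≠ 0 := by
                rw [hkey, Pi.add_apply, h1, add_zero]
                exact hx
              exact le_trans (hbound x h2) (le_of_lt hcmp')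
            · exact (sum_canCycle_support L f hA₀birth hm₀max
                (by rw [h1]; exact one_ne_zero)).2
          have hW0 := hI.low m₀ hm₀Y (c₁ + c₀) hc₁₀P hWbound
          have h1 : bdOp L c m₀ = 0 := by
            rcases zmod2_cases (bdOp L c m₀) with h | h
            · exact h
            · exact absurd (hbound m₀ (by rw [h]; exact one_ne_zero))
                (not_le.mpr hcmp')
          have h2 : (∑ x' ∈ A₀, canCycle L f x') m₀ = 1 := by
            rw [sum_canCycle_eval L f (not_death_of_birth L f hm₀b), if_pos hm₀A]
          have h3 := congrFun hkey m₀
          rw [Pi.add_apply, h1, hW0, h2, zero_add] at h3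
          exact one_ne_zero h3.symm
    · -- paired
      intro x hx hbx hxnot
      have hxy : x ≠ y := fun h => hb (h ▸ hbx)
      have hxP : x ∈ P := by
        rcases Finset.mem_insert.1 hx with h | h
        · exact absurd h hxy
        · exact h
      by_cases hxm : x = m₀
      · refine ⟨y, A₀, c₀, Finset.mem_insert_self y P, hxm ▸ hm₀A, ?_, hc₀, hc₀bd⟩
        intro x' hx'
        exact ⟨hA₀birth x' hx', hPlt x' (hI.subP (hA₀Y hx'))⟩
      · have hxY : x ∉ st.1 := fun h => hxnot (Finset.mem_erase.2 ⟨hxm, h⟩)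
        obtain ⟨u, A, c, huP, hrest⟩ := hI.paired x hxP hbx hxY
        exact ⟨u, A, c, Finset.mem_insert_of_mem huP, hrest⟩

/-! ### The invariant along the fold, and the final theorem -/

lemma pairInv_empty : PairInv L f ∅ ∅ := by
  constructor
  · exact Finset.Subset.refl ∅
  · intro x hx; simp at hx
  · intro x hx; simp at hx
  · intro z hz hzbd
    have hz0 : z = 0 := by
      funext w
      by_contra h
      simpa using hz w h
    exact ⟨∅, Finset.Subset.refl ∅, 0, by simp, by
      rw [map_zero, hz0, Finset.sum_empty, add_zero]⟩
  · intro m hm; simp at hm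
  · intro x hx; simp at hx

lemma pairInv_fold (hf : IsFilter L f) :
    ∀ l₁ l₂ : List C, sortedCells L f = l₁ ++ l₂ →
      PairInv L f l₁.toFinset (l₁.foldl (pairStep L f) (∅, ∅)).1 := by
  intro l₁
  induction l₁ using List.reverseRecOn with
  | nil =>
    intro l₂ _
    simpa using pairInv_empty L f
  | append_singleton l₁ y ih =>
    intro l₂ hsplit
    have hsplit' : sortedCells L f = l₁ ++ (y :: l₂) := by
      rw [hsplit]; simp
    have hI := ih (y :: l₂) hsplit'
    rw [List.foldl_append]
    simp only [List.foldl_cons, List.foldl_nil]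
    have hP' : (l₁ ++ [y]).toFinset = insert y l₁.toFinset := by
      rw [List.toFinset_append]
      ext w
      simp [or_comm]
    rw [hP']
    obtain ⟨hmemL, hpw⟩ := sortedCells_spec L f hf.1
    have hyL : y ∈ sortedCells L f := by rw [hsplit']; simp
    have hyc : y ∈ L.cells := (hmemL y).1 hyL
    rw [hsplit'] at hpw
    obtain ⟨hpw1, hpw2, hrel⟩ := List.pairwise_append.1 hpw
    have hprec : ∀ x ∈ l₁, f x < f y :=
      fun x hx => hrel x hx y (List.mem_cons_self (a := y) (l := l₂))
    have hyP : y ∉ l₁.toFinset := by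
      rw [List.mem_toFinset]
      intro hmem
      exact lt_irrefl _ (hprec y hmem)
    have hPlt : ∀ x ∈ l₁.toFinset, f x < f y :=
      fun x hx => hprec x (List.mem_toFinset.1 hx)
    have hPfull : ∀ z ∈ L.cells, f z < f y → z ∈ l₁.toFinset := by
      intro z hz hlt
      have hzL : z ∈ l₁ ++ (y :: l₂) := by
        rw [← hsplit']
        exact (hmemL z).2 hz
      rcases List.mem_append.1 hzL with h | h
      · exact List.mem_toFinset.2 h
      · rcases List.mem_cons.1 h with rfl | h
        · exact absurd hlt (lt_irrefl _)
        · exact absurd ((List.pairwise_cons.1 hpw2).1 z h) (not_lt.mpr (le_of_lt hlt))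
    exact pairInv_step L f hf _ hI hyc hyP hPlt hPfull

lemma foldl_snd_mono (l : List C) :
    ∀ st : Finset C × Finset (C × C), st.2 ⊆ (l.foldl (pairStep L f) st).2 := by
  induction l with
  | nil => intro st; exact subset_rfl
  | cons y l ih =>
    intro st
    rw [List.foldl_cons]
    refine subset_trans ?_ (ih (pairStep L f st y))
    rw [pairStep]
    split_ifs with hb
    · exact subset_rfl
    all_goals
      dsimp only
      exact Finset.subset_insert _ _

end Aux

/-- Every shallow pair of a filter `f` on a Lefschetz complex
is a birth-death pair of `f`; that is, `SH(f) ⊆ BD(f)`. -/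
theorem shallow_subset_birth_death (L : LC C) (f : C → ℝ) (hf : IsFilter L f)
    (s t : C) (h : IsShallow L f s t) : (s, t) ∈ BD L f := by
  obtain ⟨hst, hfacet, hcofacet⟩ := h
  have hst1 : L.bd s t ≠ 0 := by rw [hst]; exact one_ne_zero
  have htc : t ∈ L.cells := (L.bd_mem s t hst1).2
  have hsc : s ∈ L.cells := (L.bd_mem s t hst1).1
  have hslt : f s < f t := hf.2 s t hst1
  obtain ⟨hmemL, hpwAll⟩ := sortedCells_spec L f hf.1
  have htL : t ∈ sortedCells L f := (hmemL t).2 htc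
  obtain ⟨l₁, l₂, hsplit⟩ := List.append_of_mem htL
  have hI := pairInv_fold L f hf l₁ (t :: l₂) hsplit
  set st := l₁.foldl (pairStep L f) (∅, ∅) with hstdef
  set P := l₁.toFinset with hPdef
  -- sortedness facts at `t`
  have hpw := hpwAll
  rw [hsplit] at hpw
  obtain ⟨hpw1, hpw2, hrel⟩ := List.pairwise_append.1 hpw
  have hPlt : ∀ x ∈ P, f x < f t :=
    fun x hx => hrel x (List.mem_toFinset.1 hx) t (List.mem_cons_self (a := t) (l := l₂))
  have hPfull : ∀ z ∈ L.cells, f z < f t → z ∈ P := by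
    intro z hz hlt
    have hzL : z ∈ l₁ ++ (t :: l₂) := by
      rw [← hsplit]
      exact (hmemL z).2 hz
    rcases List.mem_append.1 hzL with h' | h'
    · exact List.mem_toFinset.2 h'
    · rcases List.mem_cons.1 h' with rfl | h'
      · exact absurd hlt (lt_irrefl _)
      · exact absurd ((List.pairwise_cons.1 hpw2).1 z h') (not_lt.mpr (le_of_lt hlt))
  -- `t` gives death
  have htd : givesDeath L f t := by
    refine ⟨htc, ?_⟩
    rintro ⟨c, hc, hcbd⟩
    have h1 : bdOp L c s = 0 := by
      rw [bdOp_apply]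
      apply Finset.sum_eq_zero
      intro u _
      by_cases h2 : c u = 0
      · rw [h2, mul_zero]
      · by_cases h3 : L.bd s u = 0
        · rw [h3, zero_mul]
        · exact absurd (hcofacet u h3) (not_le.mpr (hc u h2).2)
    rw [hcbd] at h1
    have h4 : col L t s = L.bd s t := rfl
    rw [h4, hst] at h1
    exact one_ne_zero h1
  have hb : ¬ givesBirth L f t := fun hbt => htd.2 hbt.2
  have hEU := death_EU L f hf hI htd hPlt hPfull
  set A₀ := hEU.exists.choose with hA₀def
  have hA₀spec := hEU.exists.choose_spec
  have hA₀Y : A₀ ⊆ st.1 := hA₀spec.1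
  obtain ⟨c₀, hc₀, hc₀bd⟩ : ∃ c : C → ZMod 2,
      (∀ z, c z ≠ 0 → z ∈ L.cells ∧ f z < f t) ∧
        bdOp L c = (∑ x ∈ A₀, canCycle L f x) + col L t := hA₀spec.2
  have hA₀birth : ∀ x ∈ A₀, givesBirth L f x := fun x hx => hI.birthY x (hA₀Y hx)
  -- `s` gives birth
  have hsb : givesBirth L f s := by
    refine ⟨hsc, col L t + Pi.single s 1, ?_, ?_⟩
    · intro w hw
      by_cases h2 : w = s
      · exfalso
        apply hw
        rw [Pi.add_apply, Pi.single_apply, if_pos h2, h2]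
        show L.bd s t + 1 = 0
        rw [hst]
        decide
      · have h3 : col L t w ≠ 0 := by
          intro h4
          apply hw
          rw [Pi.add_apply, Pi.single_apply, if_neg h2, add_zero]
          exact h4
        refine ⟨(L.bd_mem w t h3).1, lt_of_le_of_ne (hfacet w h3) ?_⟩
        intro h5
        exact h2 (hf.1 w (L.bd_mem w t h3).1 s hsc h5)
    · rw [map_add, bdOp_col, bdOp_single, zero_add]
  have hnds : ¬ givesDeath L f s := not_death_of_birth L f hsb
  -- `s` is still unpaired when `t` arrives
  have hsP : s ∈ P := hPfull s hsc hslt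
  have hsY : s ∈ st.1 := by
    by_contra hsY
    obtain ⟨u, A, c, huP, hsA, hAprop, hcsupp, hcbd'⟩ := hI.paired s hsP hsb hsY
    have hult : f u < f t := hPlt u huP
    have h1 : bdOp L c s = 0 := by
      rw [bdOp_apply]
      apply Finset.sum_eq_zero
      intro w _
      by_cases h2 : c w = 0
      · rw [h2, mul_zero]
      · by_cases h3 : L.bd s w = 0
        · rw [h3, zero_mul]
        · exact absurd (hcofacet w h3)
            (not_le.mpr (lt_trans (hcsupp w h2).2 hult))
    have h2 : (∑ x' ∈ A, canCycle L f x') s = 1 := by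
      rw [sum_canCycle_eval L f hnds, if_pos hsA]
    have h3 : col L u s = 0 := by
      by_contra h4
      exact absurd (hcofacet u h4) (not_le.mpr hult)
    rw [hcbd', Pi.add_apply, h2, h3, add_zero] at h1
    exact one_ne_zero h1
  -- `s ∈ A₀`
  have hsA₀ : s ∈ A₀ := by
    have h1 : bdOp L c₀ s = 0 := by
      rw [bdOp_apply]
      apply Finset.sum_eq_zero
      intro w _
      by_cases h2 : c₀ w = 0
      · rw [h2, mul_zero]
      · by_cases h3 : L.bd s w = 0
        · rw [h3, zero_mul]
        · exact absurd (hcofacet w h3) (not_le.mpr (hc₀ w h2).2)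
    have h2 := sum_canCycle_eval L f hnds (A := A₀)
    have h3 : col L t s = 1 := hst
    rw [hc₀bd, Pi.add_apply, h2, h3] at h1
    by_contra hns
    rw [if_neg hns, zero_add] at h1
    exact one_ne_zero h1
  have hA₀ne : A₀.Nonempty := ⟨s, hsA₀⟩
  obtain ⟨hm₀A, hm₀max⟩ := maxCellD_spec f hA₀ne t
  set m₀ := maxCellD f A₀ t with hm₀def
  have hm₀Y : m₀ ∈ st.1 := hA₀Y hm₀A
  have hm₀b : givesBirth L f m₀ := hI.birthY m₀ hm₀Y
  have hm₀cell : m₀ ∈ L.cells := hI.cellsP m₀ (hI.subP hm₀Y)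
  -- the maximal element of `A₀` is `s`
  have hm₀ : m₀ = s := by
    by_contra hne
    have hfs : f s < f m₀ :=
      lt_of_le_of_ne (hm₀max s hsA₀) (fun h' => hne (hf.1 s hsc m₀ hm₀cell h').symm)
    have hbd0 : col L t m₀ = 0 := by
      by_contra h'
      exact absurd (hfacet m₀ h') (not_le.mpr hfs)
    have hbound : ∀ x, bdOp L c₀ x ≠ 0 → f x ≤ f m₀ := by
      intro x hx
      rw [hc₀bd, Pi.add_apply] at hx
      rcases zmod2_cases ((∑ x' ∈ A₀, canCycle L f x') x) with h1 | h1
      · rw [h1, zero_add] at hx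
        exact le_trans (hfacet x hx) (le_of_lt hfs)
      · exact (sum_canCycle_support L f hA₀birth hm₀max
          (by rw [h1]; exact one_ne_zero)).2
    have h0 := hI.low m₀ hm₀Y c₀
      (fun w hw => hPfull w (hc₀ w hw).1 (hc₀ w hw).2) hbound
    rw [hc₀bd, Pi.add_apply,
      sum_canCycle_eval L f (not_death_of_birth L f hm₀b), if_pos hm₀A,
      hbd0, add_zero] at h0
    exact one_ne_zero h0
  -- conclude
  have hpair := pairStep_death L f st hb hEU
  rw [BD, pairState, hsplit, List.foldl_append]
  simp only [List.foldl_cons]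
  rw [← hstdef]
  apply foldl_snd_mono L f l₂ (pairStep L f st t)
  rw [hpair]
  show (s, t) ∈ insert (m₀, t) st.2
  rw [hm₀]
  exact Finset.mem_insert_self _ _
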